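/- Let $\xi$ be a transcendental real number, $n$ a positive integer, and $(P_i)_{i \geq 0}$ a sequence of minimal polynomials associated to $n$ and $\xi$. For each $i \geq 0$, the polynomial $S_i = P_i(\xi) P_{i+1} - P_{i+1}(\xi) P_i$ satisfies $\frac{1}{2} H(S_i) \leq H(P_{i+1}) |P_i(\xi)| \leq 2 H(S_i)$. -/
import Mathlib


open Polynomial

/-- Naive height of an integer polynomial, as a real number. -/
noncomputable def heightZ (P : Polynomial ℤ) : ℝ := ⨆ i : ℕ, |(P.coeff i : ℝ)|

/-- The real polynomial obtained from an integer polynomial. -/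
noncomputable def toR (P : Polynomial ℤ) : Polynomial ℝ := P.map (Int.castRingHom ℝ)

/-- A sequence of minimal polynomials associated to `n` and `ξ`. -/
def IsMinimalSeq (n : ℕ) (ξ : ℝ) (P : ℕ → Polynomial ℤ) : Prop :=
  (∀ i, P i ≠ 0) ∧ (∀ i, (P i).natDegree ≤ n) ∧
  (∀ i, heightZ (P i) < heightZ (P (i + 1))) ∧
  (∀ i, |Polynomial.aeval ξ (P (i + 1))| < |Polynomial.aeval ξ (P i)|) ∧
  (∀ i, ∀ Q : Polynomial ℤ, Q ≠ 0 → Q.natDegree ≤ n →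
    |Polynomial.aeval ξ Q| < |Polynomial.aeval ξ (P i)| → heightZ (P (i + 1)) ≤ heightZ Q)

/-- Naive height of a real polynomial. -/
noncomputable def heightR (P : Polynomial ℝ) : ℝ := ⨆ i : ℕ, |P.coeff i|

lemma range_abs_coeff_finite (P : Polynomial ℝ) :
    (Set.range fun i => |P.coeff i|).Finite := by
  apply Set.Finite.subset
    (Set.Finite.insert 0 ((P.support.finite_toSet.image fun i => |P.coeff i|)))
  rintro x ⟨i, rfl⟩
  by_cases h : P.coeff i = 0
  · simp [h]
  · exact Set.mem_insert_of_mem _ ⟨i, by simpa [mem_support_iff] using h, rfl⟩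

lemma coeff_le_heightR (P : Polynomial ℝ) (i : ℕ) : |P.coeff i| ≤ heightR P :=
  le_ciSup (range_abs_coeff_finite P).bddAbove i

lemma heightR_le (P : Polynomial ℝ) (M : ℝ) (hM : ∀ i, |P.coeff i| ≤ M) :
    heightR P ≤ M := ciSup_le hM

lemma heightR_nonneg (P : Polynomial ℝ) : 0 ≤ heightR P :=
  le_trans (abs_nonneg _) (coeff_le_heightR P 0)

lemma exists_heightR_eq (P : Polynomial ℝ) : ∃ j, heightR P = |P.coeff j| := by
  have h := Set.Nonempty.csSup_mem (Set.range_nonempty fun i => |P.coeff i|)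
    (range_abs_coeff_finite P)
  obtain ⟨j, hj⟩ := h
  exact ⟨j, hj.symm⟩

lemma heightZ_eq_heightR (P : Polynomial ℤ) : heightZ P = heightR (toR P) := by
  simp [heightZ, heightR, toR, coeff_map]

lemma coeff_toR (P : Polynomial ℤ) (i : ℕ) : (toR P).coeff i = (P.coeff i : ℝ) := by
  simp [toR, coeff_map]

lemma coeff_le_heightZ (P : Polynomial ℤ) (i : ℕ) : |(P.coeff i : ℝ)| ≤ heightZ P := by
  rw [heightZ_eq_heightR]
  simpa [coeff_toR] using coeff_le_heightR (toR P) i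

lemma exists_heightZ_eq (P : Polynomial ℤ) : ∃ j, heightZ P = |(P.coeff j : ℝ)| := by
  obtain ⟨j, hj⟩ := exists_heightR_eq (toR P)
  exact ⟨j, by rw [heightZ_eq_heightR, hj, coeff_toR]⟩

lemma one_le_heightZ (P : Polynomial ℤ) (hP : P ≠ 0) : 1 ≤ heightZ P := by
  obtain ⟨j, hj⟩ : ∃ j, P.coeff j ≠ 0 := by
    by_contra h
    push_neg at h
    exact hP (Polynomial.ext fun m => by simp [h m])
  refine le_trans ?_ (coeff_le_heightZ P j)
  have : (1 : ℤ) ≤ |P.coeff j| := Int.one_le_abs hj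
  calc (1:ℝ) = ((1:ℤ):ℝ) := by norm_num
    _ ≤ ((|P.coeff j| : ℤ) : ℝ) := by exact_mod_cast this
    _ = |(P.coeff j : ℝ)| := by push_cast; ring

lemma aeval_ne_zero_of_transcendental {ξ : ℝ} (hξ : Transcendental ℚ ξ)
    {Q : Polynomial ℤ} (hQ : Q ≠ 0) : Polynomial.aeval ξ Q ≠ 0 := by
  have h : Transcendental ℤ ξ :=
    hξ.restrictScalars (fun a b hab => by exact_mod_cast hab)
  intro h0
  exact hQ (transcendental_iff.mp h Q h0)

lemma key_sign {a b s : ℝ} (h1 : |b| < |a|) (h2 : |a| < 2 * |b|)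
    (hs : (0 ≤ a * b ∧ s = 1) ∨ (a * b < 0 ∧ s = -1)) :
    |b - s * a| < |a| / 2 := by
  rcases hs with ⟨hab, rfl⟩ | ⟨hab, rfl⟩ <;>
    rcases abs_cases a with ⟨e1, e2⟩ | ⟨e1, e2⟩ <;>
    rcases abs_cases b with ⟨f1, f2⟩ | ⟨f1, f2⟩ <;>
    rw [abs_lt] <;> constructor <;> nlinarith

/-- The polynomial `S_i = P_i(ξ) P_{i+1} - P_{i+1}(ξ) P_i` satisfies
`H(S_i)/2 ≤ H(P_{i+1}) |P_i(ξ)| ≤ 2 H(S_i)`. -/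
theorem height_S_bound (n : ℕ) (hn : 1 ≤ n) (ξ : ℝ) (hξ : Transcendental ℚ ξ)
    (P : ℕ → Polynomial ℤ) (hP : IsMinimalSeq n ξ P) (i : ℕ) :
    (1 / 2 : ℝ) * heightR ((Polynomial.aeval ξ (P i)) • toR (P (i + 1)) -
        (Polynomial.aeval ξ (P (i + 1))) • toR (P i)) ≤
      heightZ (P (i + 1)) * |Polynomial.aeval ξ (P i)| ∧
    heightZ (P (i + 1)) * |Polynomial.aeval ξ (P i)| ≤
      2 * heightR ((Polynomial.aeval ξ (P i)) • toR (P (i + 1)) -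
        (Polynomial.aeval ξ (P (i + 1))) • toR (P i)) := by
  obtain ⟨hne, hdeg, hht, hval, hmin⟩ := hP
  set a : ℝ := Polynomial.aeval ξ (P i) with ha_def
  set b : ℝ := Polynomial.aeval ξ (P (i + 1)) with hb_def
  set S : Polynomial ℝ := a • toR (P (i + 1)) - b • toR (P i) with hS_def
  have ha : a ≠ 0 := aeval_ne_zero_of_transcendental hξ (hne i)
  have ha0 : 0 < |a| := abs_pos.mpr ha
  have hba : |b| < |a| := hval i
  have hb0 : 0 ≤ |b| := abs_nonneg b
  have hRQ : heightZ (P i) < heightZ (P (i + 1)) := hht i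
  have hQ1 : (1 : ℝ) ≤ heightZ (P (i + 1)) := one_le_heightZ _ (hne (i + 1))
  have hR0 : (0 : ℝ) ≤ heightZ (P i) :=
    le_trans zero_le_one (one_le_heightZ _ (hne i))
  have hScoeff : ∀ j, S.coeff j
      = a * ((P (i + 1)).coeff j : ℝ) - b * ((P i).coeff j : ℝ) := by
    intro j
    simp [hS_def, coeff_sub, coeff_smul, coeff_toR, smul_eq_mul]
  have hQco := coeff_le_heightZ (P (i + 1))
  have hRco := coeff_le_heightZ (P i)
  constructor
  · have hle : heightR S ≤ 2 * (heightZ (P (i + 1)) * |a|) := by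
      apply heightR_le
      intro j
      rw [hScoeff j]
      have h1 : |a * ((P (i + 1)).coeff j : ℝ) - b * ((P i).coeff j : ℝ)|
          ≤ |a| * |((P (i + 1)).coeff j : ℝ)| + |b| * |((P i).coeff j : ℝ)| := by
        refine le_trans (abs_sub _ _) ?_
        rw [abs_mul, abs_mul]
      refine le_trans h1 ?_
      have h2 := hQco j
      have h3 := hRco j
      nlinarith [abs_nonneg ((P (i + 1)).coeff j : ℝ), abs_nonneg ((P i).coeff j : ℝ)]
    linarith
  · by_contra hcon
    push_neg at hcon
    have hHS0 : 0 ≤ heightR S := heightR_nonneg S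
    have hSabs := coeff_le_heightR S
    obtain ⟨j0, hj0⟩ := exists_heightZ_eq (P (i + 1))
    -- |a| * HQ ≤ HS + |b| * HR
    have step1 : |a| * heightZ (P (i + 1)) ≤ heightR S + |b| * heightZ (P i) := by
      have e : a * ((P (i + 1)).coeff j0 : ℝ)
          = S.coeff j0 + b * ((P i).coeff j0 : ℝ) := by
        rw [hScoeff j0]; ring
      have : |a| * heightZ (P (i + 1)) = |a * ((P (i + 1)).coeff j0 : ℝ)| := by
        rw [abs_mul, hj0]
      rw [this, e]
      refine le_trans (abs_add_le _ _) ?_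
      rw [abs_mul]
      exact add_le_add (hSabs j0)
        (mul_le_mul_of_nonneg_left (hRco j0) (abs_nonneg b))
    have hbig : |a| * heightZ (P (i + 1)) / 2 < |b| * heightZ (P i) := by
      nlinarith
    have hb2 : |a| < 2 * |b| := by nlinarith
    set s : ℤ := if 0 ≤ a * b then 1 else -1 with hs_def
    have hs1 : (s : ℝ) = 1 ∨ (s : ℝ) = -1 := by
      rw [hs_def]; split <;> simp
    have hkey : |b - (s : ℝ) * a| < |a| / 2 := by
      apply key_sign hba hb2
      rcases le_or_gt 0 (a * b) with hab | hab
      · exact Or.inl ⟨hab, by rw [hs_def, if_pos hab]; norm_num⟩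
      · exact Or.inr ⟨hab, by rw [hs_def, if_neg (not_le.mpr hab)]; norm_num⟩
    set D : Polynomial ℤ := P (i + 1) - s • P i with hD_def
    have hDcoeffR : ∀ j, ((D.coeff j : ℤ) : ℝ)
        = ((P (i + 1)).coeff j : ℝ) - (s : ℝ) * ((P i).coeff j : ℝ) := by
      intro j
      have e : D.coeff j = (P (i + 1)).coeff j - s * (P i).coeff j := by
        rw [hD_def, coeff_sub, coeff_smul, smul_eq_mul]
      rw [e]
      push_cast
      ring
    have hDco : ∀ j, |((D.coeff j : ℤ) : ℝ)| < heightZ (P (i + 1)) := by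
      intro j
      have e2 : a * ((D.coeff j : ℤ) : ℝ)
          = S.coeff j + (b - (s : ℝ) * a) * ((P i).coeff j : ℝ) := by
        rw [hDcoeffR j, hScoeff j]; ring
      have hb1 : |a| * |((D.coeff j : ℤ) : ℝ)|
          ≤ heightR S + |b - (s : ℝ) * a| * heightZ (P i) := by
        rw [← abs_mul, e2]
        refine le_trans (abs_add_le _ _) ?_
        rw [abs_mul]
        exact add_le_add (hSabs j)
          (mul_le_mul_of_nonneg_left (hRco j) (abs_nonneg _))
      have habs0 : 0 ≤ |((D.coeff j : ℤ) : ℝ)| := abs_nonneg _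
      have habs1 : 0 ≤ |b - (s : ℝ) * a| := abs_nonneg _
      nlinarith
    have haD : Polynomial.aeval ξ D = b - (s : ℝ) * a := by
      rw [hD_def, map_sub, map_zsmul, ← ha_def, ← hb_def, zsmul_eq_mul]
    have hD0 : D ≠ 0 := by
      intro h0
      have : b - (s : ℝ) * a = 0 := by rw [← haD, h0]; simp
      have hE : b = (s : ℝ) * a := by linarith
      rcases hs1 with h | h <;> rw [h] at hE <;>
        (rw [hE] at hba; simp [abs_mul, abs_neg] at hba) <;> linarith
    have hDdeg : D.natDegree ≤ n := by
      refine le_trans (natDegree_sub_le _ _) (max_le (hdeg (i + 1)) ?_)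
      exact le_trans (natDegree_smul_le _ _) (hdeg i)
    have hDval : |Polynomial.aeval ξ D| < |Polynomial.aeval ξ (P i)| := by
      rw [haD, ← ha_def]
      linarith
    have hminD := hmin i D hD0 hDdeg hDval
    obtain ⟨j1, hj1⟩ := exists_heightZ_eq D
    have := hDco j1
    rw [← hj1] at this
    linarith
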